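/- Let V be a finite-dimensional real vector space, B a nondegenerate symmetric bilinear form on V, F ⊆ V a subspace, and E := F ∩ F^⊥. Let Γ := {γ ∈ O(V,B) : γ(F) = F}, and let Γ_d := {γ ∈ Γ : γ restricts to the identity on E and the maps induced by γ on the quotients F/E and F^⊥/E are the identity}. Then Γ_d is a normal subgroup of Γ, and for every (F,V,B)-adapted decomposition V = E ⊕ W ⊕ U ⊕ E*, the subgroup Γ_b := {γ ∈ Γ : γ(W) = W, γ(U) = U, γ(E*) = E*} satisfies Γ_d ∩ Γ_b = {1} and Γ = Γ_d · Γ_b; consequently Γ is isomorphic to the semidirect product Γ_d ⋊ Γ_b (with Γ_b acting by conjugation). -/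

import Mathlib

theorem aux_internal_sdp {A : Type*} [Group A] (G N H : Subgroup A)
    (hNG : N ≤ G) (hHG : H ≤ G)
    (hconj : ∀ γ ∈ G, ∀ δ ∈ N, γ * δ * γ⁻¹ ∈ N)
    (hdisj : N ⊓ H = ⊥)
    (hfact : ∀ γ ∈ G, ∃ δ ∈ N, ∃ ρ ∈ H, γ = δ * ρ) :
    ∃ φ : ↥H →* MulAut ↥N, Nonempty (↥G ≃* SemidirectProduct ↥N ↥H φ) := by
  have conjmem : ∀ (h : ↥H) (n : ↥N), (h : A) * n * (h : A)⁻¹ ∈ N := fun h n =>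
    hconj h (hHG h.2) n n.2
  have conjmem' : ∀ (h : ↥H) (n : ↥N), (h : A)⁻¹ * n * (h : A) ∈ N := by
    intro h n
    have := hconj (h : A)⁻¹ (inv_mem (hHG h.2)) n n.2
    simpa using this
  refine ⟨{ toFun := fun h =>
            { toFun := fun n => ⟨(h : A) * n * (h : A)⁻¹, conjmem h n⟩,
              invFun := fun n => ⟨(h : A)⁻¹ * n * (h : A), conjmem' h n⟩,
              left_inv := by intro n; ext; simp [mul_assoc],
              right_inv := by intro n; ext; simp [mul_assoc],
              map_mul' := by intro a b; ext; simp [mul_assoc] },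
            map_one' := by ext n; simp,
            map_mul' := by intro a b; ext n; simp [mul_assoc] }, ?_⟩
  set φ : ↥H →* MulAut ↥N :=
    { toFun := fun h =>
        { toFun := fun n => ⟨(h : A) * n * (h : A)⁻¹, conjmem h n⟩,
          invFun := fun n => ⟨(h : A)⁻¹ * n * (h : A), conjmem' h n⟩,
          left_inv := by intro n; ext; simp [mul_assoc],
          right_inv := by intro n; ext; simp [mul_assoc],
          map_mul' := by intro a b; ext; simp [mul_assoc] },
      map_one' := by ext n; simp,
      map_mul' := by intro a b; ext n; simp [mul_assoc] } with hφ
  have hcompat : ∀ h : ↥H,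
      (Subgroup.inclusion hNG).comp (φ h).toMonoidHom =
        (MulAut.conj (Subgroup.inclusion hHG h)).toMonoidHom.comp
          (Subgroup.inclusion hNG) := by
    intro h
    ext n
    simp only [hφ, MonoidHom.comp_apply, MulEquiv.coe_toMonoidHom]
    simp [Subgroup.coe_inclusion, MulAut.conj_apply]
  set f : SemidirectProduct ↥N ↥H φ →* ↥G :=
    SemidirectProduct.lift (Subgroup.inclusion hNG) (Subgroup.inclusion hHG) hcompat with hf
  have fapply : ∀ x : SemidirectProduct ↥N ↥H φ,
      ((f x : ↥G) : A) = (x.left : A) * (x.right : A) := by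
    intro x
    conv_lhs => rw [← SemidirectProduct.inl_left_mul_inr_right x]
    rw [hf] at *
    rw [map_mul, SemidirectProduct.lift_inl, SemidirectProduct.lift_inr]
    rfl
  have hinj : Function.Injective f := by
    rw [injective_iff_map_eq_one]
    intro x hx
    have h1 : (x.left : A) * (x.right : A) = 1 := by
      rw [← fapply, hx]; simp
    have hn : (x.left : A) ∈ N ⊓ H := by
      rw [Subgroup.mem_inf]
      refine ⟨x.left.2, ?_⟩
      have hxl : (x.left : A) = ((x.right : A))⁻¹ := eq_inv_of_mul_eq_one_left h1
      rw [hxl]; exact H.inv_mem x.right.2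
    rw [hdisj, Subgroup.mem_bot] at hn
    have hr : (x.right : A) = 1 := by rwa [hn, one_mul] at h1
    have hl1 : x.left = 1 := Subtype.ext hn
    have hr1 : x.right = 1 := Subtype.ext hr
    cases x with
    | mk n h => cases hl1; cases hr1; rfl
  have hsurj : Function.Surjective f := by
    intro g
    obtain ⟨δ, hδ, ρ, hρ, hg⟩ := hfact (g : A) g.2
    refine ⟨⟨⟨δ, hδ⟩, ⟨ρ, hρ⟩⟩, ?_⟩
    apply Subtype.ext
    rw [fapply]
    exact hg.symm
  exact ⟨(MulEquiv.ofBijective f ⟨hinj, hsurj⟩).symm⟩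



set_option maxHeartbeats 3000000 in
/-- Let `Γ` be the stabilizer of `F` in `O(V,B)`, `Γ_d` the subgroup acting
trivially on `E = F ∩ F^⊥`, `F/E` and `F^⊥/E`, and `Γ_b` the subgroup preserving the pieces
of a fixed `(F,V,B)`-adapted decomposition `V = E ⊕ W ⊕ U ⊕ E*`.  Then `Γ_d` is normal in
`Γ`, `Γ_d ∩ Γ_b = 1`, `Γ = Γ_d · Γ_b`, and `Γ ≅ Γ_d ⋊ Γ_b`. -/
theorem gamma_is_semidirect_product
    (V : Type*) [AddCommGroup V] [Module ℝ V] [FiniteDimensional ℝ V]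
    (B : LinearMap.BilinForm ℝ V)
    (hBnd : B.Nondegenerate)
    (hBsymm : ∀ x y : V, B x y = B y x)
    (F : Submodule ℝ V)
    (E W U E' : Submodule ℝ V)
    (hE : E = F ⊓ B.orthogonal F)
    (hW : E ⊔ W = F)
    (hU : E ⊔ U = B.orthogonal F)
    (hinternal : DirectSum.IsInternal (![E, W, U, E'] : Fin 4 → Submodule ℝ V))
    (hEiso : ∀ x ∈ E, ∀ y ∈ E, B x y = 0)
    (hE'iso : ∀ x ∈ E', ∀ y ∈ E', B x y = 0)
    (hUW : ∀ x ∈ U, ∀ y ∈ W, B x y = 0)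
    (hEE'UW : ∀ x ∈ E ⊔ E', ∀ y ∈ U ⊔ W, B x y = 0)
    (G Gd Gb : Subgroup (V ≃ₗ[ℝ] V))
    (hG : ∀ γ : V ≃ₗ[ℝ] V, γ ∈ G ↔
      ((∀ x y : V, B (γ x) (γ y) = B x y) ∧ Submodule.map (γ : V →ₗ[ℝ] V) F = F))
    (hGd : ∀ γ : V ≃ₗ[ℝ] V, γ ∈ Gd ↔
      (γ ∈ G ∧ (∀ x ∈ E, γ x = x) ∧ (∀ x ∈ F, γ x - x ∈ E) ∧
        (∀ x ∈ B.orthogonal F, γ x - x ∈ E)))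
    (hGb : ∀ γ : V ≃ₗ[ℝ] V, γ ∈ Gb ↔
      (γ ∈ G ∧ Submodule.map (γ : V →ₗ[ℝ] V) W = W ∧
        Submodule.map (γ : V →ₗ[ℝ] V) U = U ∧
        Submodule.map (γ : V →ₗ[ℝ] V) E' = E')) :
    Gd ≤ G ∧ Gb ≤ G ∧
    (∀ γ ∈ G, ∀ δ ∈ Gd, γ * δ * γ⁻¹ ∈ Gd) ∧
    Gd ⊓ Gb = ⊥ ∧
    (∀ γ ∈ G, ∃ δ ∈ Gd, ∃ ρ ∈ Gb, γ = δ * ρ) ∧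
    (∃ φ : ↥Gb →* MulAut ↥Gd, Nonempty (↥G ≃* (SemidirectProduct ↥Gd ↥Gb φ))) := by
  classical
  set M : Fin 4 → Submodule ℝ V := ![E, W, U, E'] with hM
  set Fp := B.orthogonal F with hFpdef
  -- basic inclusions
  have hWF : W ≤ F := le_trans le_sup_right hW.le
  have hEF : E ≤ F := le_trans le_sup_left hW.le
  have hUFp : U ≤ Fp := le_trans le_sup_right hU.le
  have hEFp : E ≤ Fp := le_trans le_sup_left hU.le
  -- orthogonality conveniences
  have oEW : ∀ x ∈ E, ∀ y ∈ W, B x y = 0 := fun x hx y hy =>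
    hEE'UW x (Submodule.mem_sup_left hx) y (Submodule.mem_sup_right hy)
  have oEU : ∀ x ∈ E, ∀ y ∈ U, B x y = 0 := fun x hx y hy =>
    hEE'UW x (Submodule.mem_sup_left hx) y (Submodule.mem_sup_left hy)
  have oE'W : ∀ x ∈ E', ∀ y ∈ W, B x y = 0 := fun x hx y hy =>
    hEE'UW x (Submodule.mem_sup_right hx) y (Submodule.mem_sup_right hy)
  have oE'U : ∀ x ∈ E', ∀ y ∈ U, B x y = 0 := fun x hx y hy =>
    hEE'UW x (Submodule.mem_sup_right hx) y (Submodule.mem_sup_left hy)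
  -- stability of the orthogonal complement
  have hmono : ∀ γ ∈ G, Submodule.map (γ : V →ₗ[ℝ] V) Fp ≤ Fp := by
    intro γ hγ
    obtain ⟨hB, hF⟩ := (hG γ).mp hγ
    rintro _ ⟨x, hx, rfl⟩
    rw [hFpdef, LinearMap.BilinForm.mem_orthogonal_iff]
    intro n hn
    rw [← hF] at hn
    obtain ⟨m, hm, rfl⟩ := hn
    show B (γ m) (γ x) = 0
    rw [hB]
    exact (LinearMap.BilinForm.mem_orthogonal_iff.mp hx) m hm
  have hmapFp : ∀ γ ∈ G, Submodule.map (γ : V →ₗ[ℝ] V) Fp = Fp := by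
    intro γ hγ
    refine le_antisymm (hmono γ hγ) ?_
    intro x hx
    have h2 := hmono γ⁻¹ (inv_mem hγ)
    refine ⟨γ.symm x, h2 ⟨x, hx, rfl⟩, ?_⟩
    exact γ.apply_symm_apply x
  have hmapE : ∀ γ ∈ G, Submodule.map (γ : V →ₗ[ℝ] V) E = E := by
    intro γ hγ
    obtain ⟨hB, hF⟩ := (hG γ).mp hγ
    rw [hE, Submodule.map_inf (γ : V →ₗ[ℝ] V) (by exact γ.injective), hF, hmapFp γ hγ]
  -- preimage helper
  have hpre : ∀ (γ : V ≃ₗ[ℝ] V) (S : Submodule ℝ V),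
      Submodule.map (γ : V →ₗ[ℝ] V) S = S → ∀ x ∈ S, γ.symm x ∈ S := by
    intro γ S hS x hx
    rw [← hS] at hx
    obtain ⟨y, hy, hyx⟩ := hx
    have h : γ.symm x = y := by rw [← hyx]; exact γ.symm_apply_apply y
    rw [h]; exact hy
  -- projections
  let eq1 : (DirectSum (Fin 4) (fun i => ↥(M i))) ≃ₗ[ℝ] V :=
    LinearEquiv.ofBijective (DirectSum.coeLinearMap M) hinternal
  let p : (i : Fin 4) → (V →ₗ[ℝ] ↥(M i)) := fun i =>
    (DirectSum.component ℝ (Fin 4) (fun i => ↥(M i)) i) ∘ₗ eq1.symm.toLinearMap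
  let π : Fin 4 → (V →ₗ[ℝ] V) := fun i => (M i).subtype ∘ₗ p i
  have hπmem : ∀ i x, π i x ∈ M i := fun i x => ((eq1.symm x) i).2
  have hpself : ∀ (i : Fin 4) (x : V) (hx : x ∈ M i), p i x = ⟨x, hx⟩ := by
    intro i x hx
    exact hinternal.ofBijective_coeLinearMap_of_mem hx
  have hpne : ∀ (i j : Fin 4), j ≠ i → ∀ x ∈ M i, p j x = 0 := by
    intro i j hij x hx
    exact hinternal.ofBijective_coeLinearMap_of_mem_ne (Ne.symm hij) hx
  have hπself : ∀ (i : Fin 4) (x : V), x ∈ M i → π i x = x := by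
    intro i x hx
    show ((p i x : ↥(M i)) : V) = x
    rw [hpself i x hx]
  have hπne : ∀ (i j : Fin 4), j ≠ i → ∀ x ∈ M i, π j x = 0 := by
    intro i j hij x hx
    show ((p j x : ↥(M j)) : V) = 0
    rw [hpne i j hij x hx]
    rfl
  have hπtotal : ∀ x : V, π 0 x + π 1 x + π 2 x + π 3 x = x := by
    intro x
    have h1 : ∑ i, DirectSum.of (fun i => ↥(M i)) i ((eq1.symm x) i) = eq1.symm x :=
      DirectSum.sum_univ_of _
    have h2 : ∑ i, eq1.toLinearMap (DirectSum.of (fun i => ↥(M i)) i ((eq1.symm x) i)) = x := by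
      calc ∑ i, eq1.toLinearMap (DirectSum.of (fun i => ↥(M i)) i ((eq1.symm x) i))
          = eq1.toLinearMap (∑ i, DirectSum.of (fun i => ↥(M i)) i ((eq1.symm x) i)) :=
            (map_sum eq1.toLinearMap _ _).symm
        _ = eq1.toLinearMap (eq1.symm x) := by rw [h1]
        _ = x := eq1.apply_symm_apply x
    rw [Fin.sum_univ_four] at h2
    have h3 : ∀ (i : Fin 4),
        eq1.toLinearMap (DirectSum.of (fun i => ↥(M i)) i ((eq1.symm x) i)) = π i x := by
      intro i
      show DirectSum.coeLinearMap M (DirectSum.of _ i _) = _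
      rw [DirectSum.coeLinearMap_of]
      rfl
    rw [h3 0, h3 1, h3 2, h3 3] at h2
    exact h2
  -- decompositions in F and Fp
  have hdecF : ∀ x ∈ F, π 2 x = 0 ∧ π 3 x = 0 := by
    intro x hx
    rw [← hW] at hx
    obtain ⟨e, he, w, hw, rfl⟩ := Submodule.mem_sup.mp hx
    constructor
    · rw [map_add, hπne 0 2 (by decide) e he, hπne 1 2 (by decide) w hw, add_zero]
    · rw [map_add, hπne 0 3 (by decide) e he, hπne 1 3 (by decide) w hw, add_zero]
  have hdecF' : ∀ x ∈ F, π 0 x + π 1 x = x := by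
    intro x hx
    have ht := hπtotal x
    rw [(hdecF x hx).1, (hdecF x hx).2, add_zero, add_zero] at ht
    exact ht
  have hdecFp : ∀ x ∈ Fp, π 1 x = 0 ∧ π 3 x = 0 := by
    intro x hx
    rw [← hU] at hx
    obtain ⟨e, he, u, hu, rfl⟩ := Submodule.mem_sup.mp hx
    constructor
    · rw [map_add, hπne 0 1 (by decide) e he, hπne 2 1 (by decide) u hu, add_zero]
    · rw [map_add, hπne 0 3 (by decide) e he, hπne 2 3 (by decide) u hu, add_zero]
  have hdecFp' : ∀ x ∈ Fp, π 0 x + π 2 x = x := by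
    intro x hx
    have ht := hπtotal x
    rw [(hdecFp x hx).1, (hdecFp x hx).2, add_zero, add_zero] at ht
    exact ht
  -- disjointness of pieces
  have hdisjEW : ∀ x ∈ E, x ∈ W → x = 0 := by
    have h := (hinternal.submodule_iSupIndep.pairwiseDisjoint (show (0 : Fin 4) ≠ 1 by decide))
    exact fun x hx hx' => Submodule.disjoint_def.mp h x hx hx'
  have hdisjEU : ∀ x ∈ E, x ∈ U → x = 0 := by
    have h := (hinternal.submodule_iSupIndep.pairwiseDisjoint (show (0 : Fin 4) ≠ 2 by decide))
    exact fun x hx hx' => Submodule.disjoint_def.mp h x hx hx'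
  -- first two conjuncts
  have hGdG : Gd ≤ G := fun γ hγ => ((hGd γ).mp hγ).1
  have hGbG : Gb ≤ G := fun γ hγ => ((hGb γ).mp hγ).1
  -- normality
  have hnormal : ∀ γ ∈ G, ∀ δ ∈ Gd, γ * δ * γ⁻¹ ∈ Gd := by
    intro γ hγ δ hδ
    obtain ⟨hδG, hδE, hδF, hδFp⟩ := (hGd δ).mp hδ
    obtain ⟨hBγ, hFγ⟩ := (hG γ).mp hγ
    rw [hGd]
    refine ⟨mul_mem (mul_mem hγ hδG) (inv_mem hγ), ?_, ?_, ?_⟩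
    · intro x hx
      have hx' : γ.symm x ∈ E := hpre γ E (hmapE γ hγ) x hx
      show γ (δ (γ.symm x)) = x
      rw [hδE _ hx', γ.apply_symm_apply]
    · intro x hx
      have hx' : γ.symm x ∈ F := hpre γ F hFγ x hx
      show γ (δ (γ.symm x)) - x ∈ E
      have h5 : δ (γ.symm x) - γ.symm x ∈ E := hδF _ hx'
      have h6 : γ (δ (γ.symm x) - γ.symm x) ∈ E := by
        rw [← hmapE γ hγ]; exact ⟨_, h5, rfl⟩
      rw [map_sub, γ.apply_symm_apply] at h6
      exact h6
    · intro x hx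
      have hx' : γ.symm x ∈ Fp := hpre γ Fp (hmapFp γ hγ) x hx
      show γ (δ (γ.symm x)) - x ∈ E
      have h5 : δ (γ.symm x) - γ.symm x ∈ E := hδFp _ hx'
      have h6 : γ (δ (γ.symm x) - γ.symm x) ∈ E := by
        rw [← hmapE γ hγ]; exact ⟨_, h5, rfl⟩
      rw [map_sub, γ.apply_symm_apply] at h6
      exact h6
  -- disjointness of the two subgroups
  have hdisjoint : Gd ⊓ Gb = ⊥ := by
    rw [eq_bot_iff]
    intro δ hδ
    rw [Subgroup.mem_inf] at hδ
    obtain ⟨hδd, hδb⟩ := hδ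
    obtain ⟨hδG, hδE, hδF, hδFp⟩ := (hGd δ).mp hδd
    obtain ⟨_, hδW, hδU, hδE'⟩ := (hGb δ).mp hδb
    obtain ⟨hB, hF⟩ := (hG δ).mp hδG
    rw [Subgroup.mem_bot]
    have kW : ∀ x ∈ W, δ x = x := by
      intro x hx
      have h1 : δ x ∈ W := by rw [← hδW]; exact ⟨x, hx, rfl⟩
      have h2 : δ x - x ∈ E := hδF x (hWF hx)
      have h3 : δ x - x ∈ W := sub_mem h1 hx
      exact sub_eq_zero.mp (hdisjEW _ h2 h3)
    have kU : ∀ x ∈ U, δ x = x := by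
      intro x hx
      have h1 : δ x ∈ U := by rw [← hδU]; exact ⟨x, hx, rfl⟩
      have h2 : δ x - x ∈ E := hδFp x (hUFp hx)
      have h3 : δ x - x ∈ U := sub_mem h1 hx
      exact sub_eq_zero.mp (hdisjEU _ h2 h3)
    have kE' : ∀ x ∈ E', δ x = x := by
      intro x hx
      have h1 : δ x ∈ E' := by rw [← hδE']; exact ⟨x, hx, rfl⟩
      have hd : δ x - x ∈ E' := sub_mem h1 hx
      have key : ∀ y : V, B y (δ x - x) = 0 := by
        intro y
        have z0 : B (π 0 y) (δ x - x) = 0 := by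
          have h7 : B (π 0 y) (δ x) = B (π 0 y) x := by
            calc B (π 0 y) (δ x) = B (δ (π 0 y)) (δ x) := by rw [hδE _ (hπmem 0 y)]
              _ = B (π 0 y) x := hB _ _
          rw [map_sub, h7, sub_self]
        have z1 : B (π 1 y) (δ x - x) = 0 := by
          rw [hBsymm]
          exact hEE'UW _ (Submodule.mem_sup_right hd) _ (Submodule.mem_sup_right (hπmem 1 y))
        have z2 : B (π 2 y) (δ x - x) = 0 := by
          rw [hBsymm]
          exact hEE'UW _ (Submodule.mem_sup_right hd) _ (Submodule.mem_sup_left (hπmem 2 y))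
        have z3 : B (π 3 y) (δ x - x) = 0 := hE'iso _ (hπmem 3 y) _ hd
        conv_lhs => rw [← hπtotal y]
        simp only [map_add, LinearMap.add_apply]
        rw [z0, z1, z2, z3]
        ring
      have h8 : δ x - x = 0 := hBnd.1 _ (fun n => by rw [hBsymm]; exact key n)
      exact sub_eq_zero.mp h8
    have hall : ∀ x : V, δ x = x := by
      intro x
      conv_lhs => rw [← hπtotal x]
      rw [map_add, map_add, map_add, hδE _ (hπmem 0 x), kW _ (hπmem 1 x),
        kU _ (hπmem 2 x), kE' _ (hπmem 3 x)]
      exact hπtotal x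
    exact LinearEquiv.ext hall
  -- factorization
  have hfactor : ∀ γ ∈ G, ∃ δ ∈ Gd, ∃ ρ ∈ Gb, γ = δ * ρ := by
    intro γ hγ
    obtain ⟨hB, hF⟩ := (hG γ).mp hγ
    have hFpm := hmapFp γ hγ
    have hEm := hmapE γ hγ
    -- piece E
    let aE : ↥E ≃ₗ[ℝ] ↥E := (γ.submoduleMap E).trans (LinearEquiv.ofEq _ _ hEm)
    have haE : ∀ x : ↥E, ((aE x : ↥E) : V) = γ x := fun x => rfl
    -- piece W
    let lW : ↥W →ₗ[ℝ] ↥W := (p 1) ∘ₗ (γ : V →ₗ[ℝ] V) ∘ₗ W.subtype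
    have hlW : ∀ w : ↥W, ((lW w : ↥W) : V) = π 1 (γ w) := fun w => rfl
    have hlWinj : Function.Injective lW := by
      rw [injective_iff_map_eq_zero]
      intro w hw0
      have h0 : π 1 (γ (w : V)) = 0 := by
        rw [← hlW w, hw0]
        exact ZeroMemClass.coe_zero _
      have hγwF : γ (w : V) ∈ F := by rw [← hF]; exact ⟨w, hWF w.2, rfl⟩
      have h1 : π 0 (γ (w : V)) + π 1 (γ (w : V)) = γ (w : V) := hdecF' _ hγwF
      rw [h0, add_zero] at h1
      have h2 : γ (w : V) ∈ E := h1 ▸ hπmem 0 (γ (w : V))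
      have h3 : (w : V) ∈ E := by
        rw [← hEm] at h2
        obtain ⟨y, hy, hyx⟩ := h2
        have h4 := γ.injective hyx
        rwa [← h4]
      exact Subtype.ext (hdisjEW _ h3 w.2)
    let ρW : ↥W ≃ₗ[ℝ] ↥W := LinearEquiv.ofBijective lW
      ⟨hlWinj, LinearMap.injective_iff_surjective.mp hlWinj⟩
    have hρW : ∀ w : ↥W, ((ρW w : ↥W) : V) = π 1 (γ w) := fun w => rfl
    -- piece U
    let lU : ↥U →ₗ[ℝ] ↥U := (p 2) ∘ₗ (γ : V →ₗ[ℝ] V) ∘ₗ U.subtype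
    have hlU : ∀ u : ↥U, ((lU u : ↥U) : V) = π 2 (γ u) := fun u => rfl
    have hlUinj : Function.Injective lU := by
      rw [injective_iff_map_eq_zero]
      intro u hu0
      have h0 : π 2 (γ (u : V)) = 0 := by
        rw [← hlU u, hu0]
        exact ZeroMemClass.coe_zero _
      have hγuFp : γ (u : V) ∈ Fp := by rw [← hFpm]; exact ⟨u, hUFp u.2, rfl⟩
      have h1 : π 0 (γ (u : V)) + π 2 (γ (u : V)) = γ (u : V) := hdecFp' _ hγuFp
      rw [h0, add_zero] at h1
      have h2 : γ (u : V) ∈ E := h1 ▸ hπmem 0 (γ (u : V))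
      have h3 : (u : V) ∈ E := by
        rw [← hEm] at h2
        obtain ⟨y, hy, hyx⟩ := h2
        have h4 := γ.injective hyx
        rwa [← h4]
      exact Subtype.ext (hdisjEU _ h3 u.2)
    let ρU : ↥U ≃ₗ[ℝ] ↥U := LinearEquiv.ofBijective lU
      ⟨hlUinj, LinearMap.injective_iff_surjective.mp hlUinj⟩
    have hρU : ∀ u : ↥U, ((ρU u : ↥U) : V) = π 2 (γ u) := fun u => rfl
    -- piece E' via the perfect pairing with E
    let clin : ↥E' →ₗ[ℝ] Module.Dual ℝ ↥E := (B.flip.compl₂ E.subtype).domRestrict E'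
    have hclin : ∀ (e' : ↥E') (e : ↥E), clin e' e = B (e : V) (e' : V) := fun _ _ => rfl
    have hcinj : Function.Injective clin := by
      rw [injective_iff_map_eq_zero]
      intro e' h0
      have hz : ∀ e ∈ E, B e ((e' : ↥E') : V) = 0 := by
        intro e he
        have h5 := LinearMap.congr_fun h0 ⟨e, he⟩
        exact h5
      have hzz : ∀ y, B ((e' : ↥E') : V) y = 0 := by
        intro y
        have z0 : B ((e' : ↥E') : V) (π 0 y) = 0 := by
          rw [hBsymm]; exact hz _ (hπmem 0 y)
        have z1 : B ((e' : ↥E') : V) (π 1 y) = 0 :=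
          hEE'UW _ (Submodule.mem_sup_right e'.2) _ (Submodule.mem_sup_right (hπmem 1 y))
        have z2 : B ((e' : ↥E') : V) (π 2 y) = 0 :=
          hEE'UW _ (Submodule.mem_sup_right e'.2) _ (Submodule.mem_sup_left (hπmem 2 y))
        have z3 : B ((e' : ↥E') : V) (π 3 y) = 0 := hE'iso _ e'.2 _ (hπmem 3 y)
        conv_lhs => rw [← hπtotal y]
        rw [map_add, map_add, map_add, z0, z1, z2, z3]
        ring
      exact Subtype.ext (hBnd.1 _ hzz)
    let c'lin : ↥E →ₗ[ℝ] Module.Dual ℝ ↥E' := (B.compl₂ E'.subtype).domRestrict E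
    have hc'inj : Function.Injective c'lin := by
      rw [injective_iff_map_eq_zero]
      intro e h0
      have hz : ∀ e' ∈ E', B ((e : ↥E) : V) e' = 0 := by
        intro e' he'
        have h5 := LinearMap.congr_fun h0 ⟨e', he'⟩
        exact h5
      have hzz : ∀ y, B ((e : ↥E) : V) y = 0 := by
        intro y
        have z0 : B ((e : ↥E) : V) (π 0 y) = 0 := hEiso _ e.2 _ (hπmem 0 y)
        have z1 : B ((e : ↥E) : V) (π 1 y) = 0 :=
          hEE'UW _ (Submodule.mem_sup_left e.2) _ (Submodule.mem_sup_right (hπmem 1 y))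
        have z2 : B ((e : ↥E) : V) (π 2 y) = 0 :=
          hEE'UW _ (Submodule.mem_sup_left e.2) _ (Submodule.mem_sup_left (hπmem 2 y))
        have z3 : B ((e : ↥E) : V) (π 3 y) = 0 := hz _ (hπmem 3 y)
        conv_lhs => rw [← hπtotal y]
        rw [map_add, map_add, map_add, z0, z1, z2, z3]
        ring
      exact Subtype.ext (hBnd.1 _ hzz)
    have hrank : Module.finrank ℝ ↥E' = Module.finrank ℝ (Module.Dual ℝ ↥E) := by
      have d1 : Module.finrank ℝ ↥E' ≤ Module.finrank ℝ (Module.Dual ℝ ↥E) :=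
        LinearMap.finrank_le_finrank_of_injective hcinj
      have d2 : Module.finrank ℝ ↥E ≤ Module.finrank ℝ (Module.Dual ℝ ↥E') :=
        LinearMap.finrank_le_finrank_of_injective hc'inj
      rw [Subspace.dual_finrank_eq] at d1 d2
      rw [Subspace.dual_finrank_eq]
      omega
    let cE : ↥E' ≃ₗ[ℝ] Module.Dual ℝ ↥E := LinearEquiv.ofBijective clin
      ⟨hcinj, (LinearMap.injective_iff_surjective_of_finrank_eq_finrank hrank).mp hcinj⟩
    let ρE' : ↥E' ≃ₗ[ℝ] ↥E' :=
      cE.trans ((LinearEquiv.arrowCongr aE (LinearEquiv.refl ℝ ℝ)).trans cE.symm)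
    have hρE'key : ∀ (e : ↥E) (e' : ↥E'), B ((aE e : ↥E) : V) ((ρE' e' : ↥E') : V)
        = B ((e : ↥E) : V) ((e' : ↥E') : V) := by
      intro e e'
      have h1 : cE (ρE' e') = (LinearEquiv.arrowCongr aE (LinearEquiv.refl ℝ ℝ)) (cE e') := by
        show cE (cE.symm _) = _
        rw [cE.apply_symm_apply]
        rfl
      have h2 := congrArg (fun g : Module.Dual ℝ ↥E => g (aE e)) h1
      rw [LinearEquiv.arrowCongr_apply, aE.symm_apply_apply] at h2
      exact h2
    -- assemble ρ
    let ρlin : V →ₗ[ℝ] V :=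
      E.subtype ∘ₗ aE.toLinearMap ∘ₗ (p 0) + W.subtype ∘ₗ ρW.toLinearMap ∘ₗ (p 1)
        + U.subtype ∘ₗ ρU.toLinearMap ∘ₗ (p 2) + E'.subtype ∘ₗ ρE'.toLinearMap ∘ₗ (p 3)
    have hρlin_eq : ∀ x : V, ρlin x = ((aE (p 0 x) : ↥E) : V) + ((ρW (p 1 x) : ↥W) : V)
        + ((ρU (p 2 x) : ↥U) : V) + ((ρE' (p 3 x) : ↥E') : V) := fun x => rfl
    have honE : ∀ (x : V) (hx : x ∈ E), ρlin x = ((aE ⟨x, hx⟩ : ↥E) : V) := by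
      intro x hx
      have e0 : p 0 x = ⟨x, hx⟩ := hpself 0 x hx
      have e1 : p 1 x = 0 := hpne 0 1 (by decide) x hx
      have e2 : p 2 x = 0 := hpne 0 2 (by decide) x hx
      have e3 : p 3 x = 0 := hpne 0 3 (by decide) x hx
      rw [hρlin_eq x, e0, e1, e2, e3]
      erw [map_zero ρW, map_zero ρU, map_zero ρE']
      simp only [ZeroMemClass.coe_zero, add_zero, zero_add]
      rfl
    have honW : ∀ (x : V) (hx : x ∈ W), ρlin x = ((ρW ⟨x, hx⟩ : ↥W) : V) := by
      intro x hx
      have e0 : p 0 x = 0 := hpne 1 0 (by decide) x hx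
      have e1 : p 1 x = ⟨x, hx⟩ := hpself 1 x hx
      have e2 : p 2 x = 0 := hpne 1 2 (by decide) x hx
      have e3 : p 3 x = 0 := hpne 1 3 (by decide) x hx
      rw [hρlin_eq x, e0, e1, e2, e3]
      erw [map_zero aE, map_zero ρU, map_zero ρE']
      simp only [ZeroMemClass.coe_zero, add_zero, zero_add]
      rfl
    have honU : ∀ (x : V) (hx : x ∈ U), ρlin x = ((ρU ⟨x, hx⟩ : ↥U) : V) := by
      intro x hx
      have e0 : p 0 x = 0 := hpne 2 0 (by decide) x hx
      have e1 : p 1 x = 0 := hpne 2 1 (by decide) x hx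
      have e2 : p 2 x = ⟨x, hx⟩ := hpself 2 x hx
      have e3 : p 3 x = 0 := hpne 2 3 (by decide) x hx
      rw [hρlin_eq x, e0, e1, e2, e3]
      erw [map_zero aE, map_zero ρW, map_zero ρE']
      simp only [ZeroMemClass.coe_zero, add_zero, zero_add]
      rfl
    have honE' : ∀ (x : V) (hx : x ∈ E'), ρlin x = ((ρE' ⟨x, hx⟩ : ↥E') : V) := by
      intro x hx
      have e0 : p 0 x = 0 := hpne 3 0 (by decide) x hx
      have e1 : p 1 x = 0 := hpne 3 1 (by decide) x hx
      have e2 : p 2 x = 0 := hpne 3 2 (by decide) x hx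
      have e3 : p 3 x = ⟨x, hx⟩ := hpself 3 x hx
      rw [hρlin_eq x, e0, e1, e2, e3]
      erw [map_zero aE, map_zero ρW, map_zero ρU]
      simp only [ZeroMemClass.coe_zero, add_zero, zero_add]
      rfl
    -- injectivity of ρlin
    have hρinj : Function.Injective ρlin := by
      rw [injective_iff_map_eq_zero]
      intro x hx0
      have c0 : p 0 (ρlin x) = aE (p 0 x) := by
        rw [hρlin_eq x, map_add, map_add, map_add,
          hpself 0 _ (aE (p 0 x)).2, hpne 1 0 (by decide) _ (ρW (p 1 x)).2,
          hpne 2 0 (by decide) _ (ρU (p 2 x)).2, hpne 3 0 (by decide) _ (ρE' (p 3 x)).2]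
        simp
        rfl
      have c1 : p 1 (ρlin x) = ρW (p 1 x) := by
        rw [hρlin_eq x, map_add, map_add, map_add,
          hpself 1 _ (ρW (p 1 x)).2, hpne 0 1 (by decide) _ (aE (p 0 x)).2,
          hpne 2 1 (by decide) _ (ρU (p 2 x)).2, hpne 3 1 (by decide) _ (ρE' (p 3 x)).2]
        simp
        rfl
      have c2 : p 2 (ρlin x) = ρU (p 2 x) := by
        rw [hρlin_eq x, map_add, map_add, map_add,
          hpself 2 _ (ρU (p 2 x)).2, hpne 0 2 (by decide) _ (aE (p 0 x)).2,
          hpne 1 2 (by decide) _ (ρW (p 1 x)).2, hpne 3 2 (by decide) _ (ρE' (p 3 x)).2]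
        simp
        rfl
      have c3 : p 3 (ρlin x) = ρE' (p 3 x) := by
        rw [hρlin_eq x, map_add, map_add, map_add,
          hpself 3 _ (ρE' (p 3 x)).2, hpne 0 3 (by decide) _ (aE (p 0 x)).2,
          hpne 1 3 (by decide) _ (ρW (p 1 x)).2, hpne 2 3 (by decide) _ (ρU (p 2 x)).2]
        simp
        rfl
      rw [hx0] at c0 c1 c2 c3
      rw [map_zero] at c0 c1 c2 c3
      have d0 : p 0 x = 0 := by
        apply aE.injective; rw [← c0]; exact (map_zero aE).symm
      have d1 : p 1 x = 0 := by
        apply ρW.injective; rw [← c1]; exact (map_zero ρW).symm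
      have d2 : p 2 x = 0 := by
        apply ρU.injective; rw [← c2]; exact (map_zero ρU).symm
      have d3 : p 3 x = 0 := by
        apply ρE'.injective; rw [← c3]; exact (map_zero ρE').symm
      have p0 : π 0 x = 0 := by show ((p 0 x : ↥E) : V) = 0; rw [d0]; rfl
      have p1 : π 1 x = 0 := by show ((p 1 x : ↥W) : V) = 0; rw [d1]; rfl
      have p2 : π 2 x = 0 := by show ((p 2 x : ↥U) : V) = 0; rw [d2]; rfl
      have p3 : π 3 x = 0 := by show ((p 3 x : ↥E') : V) = 0; rw [d3]; rfl
      have := hπtotal x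
      rw [p0, p1, p2, p3] at this
      simpa using this.symm
    let ρ : V ≃ₗ[ℝ] V := LinearEquiv.ofBijective ρlin
      ⟨hρinj, LinearMap.injective_iff_surjective.mp hρinj⟩
    -- ρ maps pieces onto themselves
    have hmapρ : ∀ (S : Submodule ℝ V) (f : ↥S ≃ₗ[ℝ] ↥S),
        (∀ (x : V) (hx : x ∈ S), ρlin x = ((f ⟨x, hx⟩ : ↥S) : V)) →
        Submodule.map (ρ : V →ₗ[ℝ] V) S = S := by
      intro S f hf
      apply le_antisymm
      · rintro _ ⟨x, hx, rfl⟩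
        show ρlin x ∈ S
        rw [hf x hx]
        exact (f ⟨x, hx⟩).2
      · intro z hz
        refine ⟨((f.symm ⟨z, hz⟩ : ↥S) : V), (f.symm ⟨z, hz⟩).2, ?_⟩
        show ρlin ((f.symm ⟨z, hz⟩ : ↥S) : V) = z
        rw [hf _ (f.symm ⟨z, hz⟩).2]
        show ((f (f.symm ⟨z, hz⟩) : ↥S) : V) = z
        rw [f.apply_symm_apply]
    have hmE2 : Submodule.map (ρ : V →ₗ[ℝ] V) E = E := hmapρ E aE (fun x hx => honE x hx)
    have hmW2 : Submodule.map (ρ : V →ₗ[ℝ] V) W = W := hmapρ W ρW (fun x hx => honW x hx)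
    have hmU2 : Submodule.map (ρ : V →ₗ[ℝ] V) U = U := hmapρ U ρU (fun x hx => honU x hx)
    have hmE'2 : Submodule.map (ρ : V →ₗ[ℝ] V) E' = E' := hmapρ E' ρE' (fun x hx => honE' x hx)
    -- convenient restatements
    have hρW' : ∀ (x : V) (hx : x ∈ W), ρlin x = π 1 (γ x) := by
      intro x hx
      rw [honW x hx]
      exact hρW ⟨x, hx⟩
    have hρU' : ∀ (x : V) (hx : x ∈ U), ρlin x = π 2 (γ x) := by
      intro x hx
      rw [honU x hx]
      exact hρU ⟨x, hx⟩
    have hρEfact : ∀ (x : V) (hx : x ∈ E), ρlin x = γ x ∧ ρlin x ∈ E := by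
      intro x hx
      rw [honE x hx]
      exact ⟨haE _, (aE ⟨x, hx⟩).2⟩
    have hρWfact : ∀ (x : V), x ∈ W → ρlin x ∈ W ∧ γ x = π 0 (γ x) + ρlin x := by
      intro x hx
      constructor
      · rw [honW x hx]; exact (ρW ⟨x, hx⟩).2
      · rw [hρW' x hx]
        have hγF : γ x ∈ F := by rw [← hF]; exact ⟨x, hWF hx, rfl⟩
        exact (hdecF' _ hγF).symm
    have hρUfact : ∀ (x : V), x ∈ U → ρlin x ∈ U ∧ γ x = π 0 (γ x) + ρlin x := by
      intro x hx
      constructor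
      · rw [honU x hx]; exact (ρU ⟨x, hx⟩).2
      · rw [hρU' x hx]
        have hγFp : γ x ∈ Fp := by rw [← hFpm]; exact ⟨x, hUFp hx, rfl⟩
        exact (hdecFp' _ hγFp).symm
    have hρE'fact : ∀ (x : V), x ∈ E' → ρlin x ∈ E' := by
      intro x hx
      rw [honE' x hx]
      exact (ρE' ⟨x, hx⟩).2
    -- B-preservation on pieces
    have hcases : ∀ x y : V, (x ∈ E ∨ x ∈ W ∨ x ∈ U ∨ x ∈ E') →
        (y ∈ E ∨ y ∈ W ∨ y ∈ U ∨ y ∈ E') → B (ρlin x) (ρlin y) = B x y := by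
      intro x y hx hy
      rcases hx with hx | hx | hx | hx <;> rcases hy with hy | hy | hy | hy
      · rw [hEiso _ (hρEfact x hx).2 _ (hρEfact y hy).2, hEiso _ hx _ hy]
      · rw [oEW _ (hρEfact x hx).2 _ (hρWfact y hy).1, oEW _ hx _ hy]
      · rw [oEU _ (hρEfact x hx).2 _ (hρUfact y hy).1, oEU _ hx _ hy]
      · rw [honE x hx, honE' y hy]
        exact hρE'key ⟨x, hx⟩ ⟨y, hy⟩
      · rw [hBsymm (ρlin x) (ρlin y), hBsymm x y,
          oEW _ (hρEfact y hy).2 _ (hρWfact x hx).1, oEW _ hy _ hx]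
      · have hx' := hρWfact x hx
        have hy' := hρWfact y hy
        have h1 : B (γ x) (γ y) = B x y := hB x y
        rw [hx'.2, hy'.2] at h1
        simp only [map_add, LinearMap.add_apply] at h1
        rw [hEiso _ (hπmem 0 (γ x)) _ (hπmem 0 (γ y)),
          oEW _ (hπmem 0 (γ x)) _ hy'.1,
          hBsymm (ρlin x) (π 0 (γ y)), oEW _ (hπmem 0 (γ y)) _ hx'.1] at h1
        simpa using h1
      · rw [hBsymm (ρlin x) (ρlin y), hBsymm x y,
          hUW _ (hρUfact y hy).1 _ (hρWfact x hx).1, hUW _ hy _ hx]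
      · rw [hBsymm (ρlin x) (ρlin y), hBsymm x y,
          oE'W _ (hρE'fact y hy) _ (hρWfact x hx).1, oE'W _ hy _ hx]
      · rw [hBsymm (ρlin x) (ρlin y), hBsymm x y,
          oEU _ (hρEfact y hy).2 _ (hρUfact x hx).1, oEU _ hy _ hx]
      · rw [hUW _ (hρUfact x hx).1 _ (hρWfact y hy).1, hUW _ hx _ hy]
      · have hx' := hρUfact x hx
        have hy' := hρUfact y hy
        have h1 : B (γ x) (γ y) = B x y := hB x y
        rw [hx'.2, hy'.2] at h1
        simp only [map_add, LinearMap.add_apply] at h1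
        rw [hEiso _ (hπmem 0 (γ x)) _ (hπmem 0 (γ y)),
          oEU _ (hπmem 0 (γ x)) _ hy'.1,
          hBsymm (ρlin x) (π 0 (γ y)), oEU _ (hπmem 0 (γ y)) _ hx'.1] at h1
        simpa using h1
      · rw [hBsymm (ρlin x) (ρlin y), hBsymm x y,
          oE'U _ (hρE'fact y hy) _ (hρUfact x hx).1, oE'U _ hy _ hx]
      · rw [hBsymm (ρlin x) (ρlin y), hBsymm x y, honE y hy, honE' x hx]
        exact hρE'key ⟨y, hy⟩ ⟨x, hx⟩
      · rw [oE'W _ (hρE'fact x hx) _ (hρWfact y hy).1, oE'W _ hx _ hy]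
      · rw [oE'U _ (hρE'fact x hx) _ (hρUfact y hy).1, oE'U _ hx _ hy]
      · rw [hE'iso _ (hρE'fact x hx) _ (hρE'fact y hy), hE'iso _ hx _ hy]
    have hmemcases : ∀ (i : Fin 4) (x : V), π i x ∈ E ∨ π i x ∈ W ∨ π i x ∈ U ∨ π i x ∈ E' := by
      intro i x
      fin_cases i
      · exact Or.inl (hπmem 0 x)
      · exact Or.inr (Or.inl (hπmem 1 x))
      · exact Or.inr (Or.inr (Or.inl (hπmem 2 x)))
      · exact Or.inr (Or.inr (Or.inr (hπmem 3 x)))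
    have hρB : ∀ x y : V, B (ρlin x) (ρlin y) = B x y := by
      intro x y
      have hc : ∀ i j : Fin 4, B (ρlin (π i x)) (ρlin (π j y)) = B (π i x) (π j y) :=
        fun i j => hcases _ _ (hmemcases i x) (hmemcases j y)
      conv_lhs => rw [← hπtotal x, ← hπtotal y]
      conv_rhs => rw [← hπtotal x, ← hπtotal y]
      simp only [map_add, LinearMap.add_apply]
      rw [hc 0 0, hc 0 1, hc 0 2, hc 0 3, hc 1 0, hc 1 1, hc 1 2, hc 1 3,
        hc 2 0, hc 2 1, hc 2 2, hc 2 3, hc 3 0, hc 3 1, hc 3 2, hc 3 3]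
    -- ρ belongs to Gb
    have hργF : Submodule.map (ρ : V →ₗ[ℝ] V) F = F := by
      rw [← hW, Submodule.map_sup, hmE2, hmW2]
    have hργFp : Submodule.map (ρ : V →ₗ[ℝ] V) Fp = Fp := by
      rw [← hU, Submodule.map_sup, hmE2, hmU2]
    have hρG : ρ ∈ G := (hG ρ).mpr ⟨hρB, hργF⟩
    have hρGb : ρ ∈ Gb := (hGb ρ).mpr ⟨hρG, hmW2, hmU2, hmE'2⟩
    -- δ := γ * ρ⁻¹ belongs to Gd
    refine ⟨γ * ρ⁻¹, ?_, ρ, hρGb, by group⟩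
    rw [hGd]
    refine ⟨mul_mem hγ (inv_mem (hGbG hρGb)), ?_, ?_, ?_⟩
    · intro x hx
      show γ (ρ.symm x) = x
      have h1 : ρ ((aE.symm ⟨x, hx⟩ : ↥E) : V) = x := by
        show ρlin ((aE.symm ⟨x, hx⟩ : ↥E) : V) = x
        rw [honE _ (aE.symm ⟨x, hx⟩).2]
        show ((aE (aE.symm ⟨x, hx⟩) : ↥E) : V) = x
        rw [aE.apply_symm_apply]
      have h2 : ρ.symm x = ((aE.symm ⟨x, hx⟩ : ↥E) : V) := by
        apply ρ.injective
        rw [ρ.apply_symm_apply]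
        exact h1.symm
      rw [h2]
      calc γ ((aE.symm ⟨x, hx⟩ : ↥E) : V) = ((aE (aE.symm ⟨x, hx⟩) : ↥E) : V) := (haE _).symm
        _ = x := by rw [aE.apply_symm_apply]
    · intro x hx
      show γ (ρ.symm x) - x ∈ E
      set y := ρ.symm x with hydef
      have hsymmF : y ∈ F := hpre ρ F hργF x hx
      have hxy : ρ y = x := ρ.apply_symm_apply x
      have hdec := hdecF' y hsymmF
      have hx2 : x = ρlin (π 0 y) + ρlin (π 1 y) := by
        conv_lhs => rw [← hxy]
        show ρlin y = _
        conv_lhs => rw [← hdec]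
        rw [map_add]
      have hγy : γ y = γ (π 0 y) + γ (π 1 y) := by
        conv_lhs => rw [← hdec]
        rw [map_add]
      have e0 : ρlin (π 0 y) = γ (π 0 y) :=
        (hρEfact _ (hπmem 0 y)).1
      have e1 : γ (π 1 y) - ρlin (π 1 y) ∈ E := by
        rw [hρW' _ (hπmem 1 y)]
        have hγw : γ (π 1 y) ∈ F := by
          rw [← hF]; exact ⟨_, hWF (hπmem 1 y), rfl⟩
        have h10 : γ (π 1 y) - π 1 (γ (π 1 y))
            = π 0 (γ (π 1 y)) := (eq_sub_of_add_eq (hdecF' _ hγw)).symm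
        rw [h10]
        exact hπmem 0 _
      rw [hγy, hx2, e0]
      have hrw : γ (π 0 y) + γ (π 1 y)
          - (γ (π 0 y) + ρlin (π 1 y))
          = γ (π 1 y) - ρlin (π 1 y) := by
        abel
      rw [hrw]
      exact e1
    · intro x hx
      show γ (ρ.symm x) - x ∈ E
      set y := ρ.symm x with hydef
      have hsymmFp : y ∈ Fp := hpre ρ Fp hργFp x hx
      have hxy : ρ y = x := ρ.apply_symm_apply x
      have hdec := hdecFp' y hsymmFp
      have hx2 : x = ρlin (π 0 y) + ρlin (π 2 y) := by
        conv_lhs => rw [← hxy]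
        show ρlin y = _
        conv_lhs => rw [← hdec]
        rw [map_add]
      have hγy : γ y = γ (π 0 y) + γ (π 2 y) := by
        conv_lhs => rw [← hdec]
        rw [map_add]
      have e0 : ρlin (π 0 y) = γ (π 0 y) :=
        (hρEfact _ (hπmem 0 y)).1
      have e1 : γ (π 2 y) - ρlin (π 2 y) ∈ E := by
        rw [hρU' _ (hπmem 2 y)]
        have hγu : γ (π 2 y) ∈ Fp := by
          rw [← hFpm]; exact ⟨_, hUFp (hπmem 2 y), rfl⟩
        have h10 : γ (π 2 y) - π 2 (γ (π 2 y))
            = π 0 (γ (π 2 y)) := (eq_sub_of_add_eq (hdecFp' _ hγu)).symm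
        rw [h10]
        exact hπmem 0 _
      rw [hγy, hx2, e0]
      have hrw : γ (π 0 y) + γ (π 2 y)
          - (γ (π 0 y) + ρlin (π 2 y))
          = γ (π 2 y) - ρlin (π 2 y) := by
        abel
      rw [hrw]
      exact e1
  exact ⟨hGdG, hGbG, hnormal, hdisjoint, hfactor,
    aux_internal_sdp G Gd Gb hGdG hGbG hnormal hdisjoint hfactor⟩
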